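/- Let n ≥ 1, let K and V be real positive-definite n×n matrices, let β > 0, set r := 1/(1 + β), and let m ∈ ℝⁿ, a ∈ ℝ, and e_j be the j-th standard basis vector of ℝⁿ. Then the matrices K⁻¹ + (1/β)·V⁻¹ and (1 − r)·K⁻¹ + r·V⁻¹ are invertible, and (K⁻¹ + (1/β)·V⁻¹)⁻¹·((1/β)·V⁻¹·m − a·e_j) = m − (1 − r)·((1 − r)·K⁻¹ + r·V⁻¹)⁻¹·(K⁻¹·m + a·e_j). -/

import Mathlib

lemma posDef_smul {n : ℕ} {M : Matrix (Fin n) (Fin n) ℝ} (hM : M.PosDef)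
    {c : ℝ} (hc : 0 < c) : (c • M).PosDef := by
  refine Matrix.PosDef.of_dotProduct_mulVec_pos ?_ (fun x hx => ?_)
  · unfold Matrix.IsHermitian
    rw [Matrix.conjTranspose_smul, hM.1]
    simp
  · rw [Matrix.smul_mulVec, dotProduct_smul]
    exact mul_pos hc (hM.dotProduct_mulVec_pos hx)

/-- Incremental form of the proximal-gradient SVI mean update: for positive-definite
`K`, `V`, step size `β > 0` and `r := 1/(1+β)`, the matrices `K⁻¹ + (1/β)·V⁻¹` and
`(1−r)·K⁻¹ + r·V⁻¹` are invertible, and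
`(K⁻¹ + (1/β)·V⁻¹)⁻¹((1/β)·V⁻¹m − a·e_j)
  = m − (1−r)·((1−r)·K⁻¹ + r·V⁻¹)⁻¹(K⁻¹m + a·e_j)`. -/
theorem stmt_12 (n : ℕ) (hn : 1 ≤ n) (K V : Matrix (Fin n) (Fin n) ℝ)
    (hK : K.PosDef) (hV : V.PosDef) (β : ℝ) (hβ : 0 < β)
    (r : ℝ) (hr : r = 1 / (1 + β))
    (m : Fin n → ℝ) (a : ℝ) (j : Fin n) :
    IsUnit (K⁻¹ + (1 / β) • V⁻¹) ∧
    IsUnit ((1 - r) • K⁻¹ + r • V⁻¹) ∧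
    (K⁻¹ + (1 / β) • V⁻¹)⁻¹.mulVec
        ((1 / β) • V⁻¹.mulVec m - a • (Pi.single j 1 : Fin n → ℝ)) =
      m - (1 - r) • ((1 - r) • K⁻¹ + r • V⁻¹)⁻¹.mulVec
        (K⁻¹.mulVec m + a • (Pi.single j 1 : Fin n → ℝ)) := by
  have h1β : (0:ℝ) < 1 + β := by linarith
  have hrpos : 0 < r := by rw [hr]; positivity
  have hc : 0 < 1 - r := by
    rw [hr, sub_pos, div_lt_one h1β]; linarith
  set A := K⁻¹ + (1 / β) • V⁻¹ with hAdef
  have hApd : A.PosDef := hK.inv.add (posDef_smul hV.inv (by positivity))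
  have hAU : IsUnit A := hApd.isUnit
  have hB : (1 - r) • A = (1 - r) • K⁻¹ + r • V⁻¹ := by
    rw [hAdef, smul_add, smul_smul]
    congr 2
    rw [hr]; field_simp; ring
  have hBU : IsUnit ((1 - r) • K⁻¹ + r • V⁻¹) := by
    rw [← hB]
    exact (posDef_smul hApd hc).isUnit
  refine ⟨hAU, hBU, ?_⟩
  have hAdet : IsUnit A.det := (Matrix.isUnit_iff_isUnit_det A).1 hAU
  have hinvA : A⁻¹ * A = 1 := Matrix.nonsing_inv_mul A hAdet
  have hBinv : ((1 - r) • K⁻¹ + r • V⁻¹)⁻¹ = (1 - r)⁻¹ • A⁻¹ := by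
    rw [← hB]
    apply Matrix.inv_eq_left_inv
    rw [Matrix.smul_mul, Matrix.mul_smul, smul_smul, inv_mul_cancel₀ hc.ne', one_smul, hinvA]
  set e : Fin n → ℝ := (Pi.single j 1 : Fin n → ℝ)
  have hRHS : (1 - r) • ((1 - r) • K⁻¹ + r • V⁻¹)⁻¹.mulVec (K⁻¹.mulVec m + a • e)
      = A⁻¹.mulVec (K⁻¹.mulVec m + a • e) := by
    rw [hBinv, Matrix.smul_mulVec, smul_smul, mul_inv_cancel₀ hc.ne', one_smul]
  rw [hRHS]
  have hx : (1 / β) • V⁻¹.mulVec m - a • e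
      = A.mulVec m - (K⁻¹.mulVec m + a • e) := by
    rw [hAdef, Matrix.add_mulVec, Matrix.smul_mulVec]
    abel
  rw [hx, Matrix.mulVec_sub, Matrix.mulVec_mulVec, hinvA, Matrix.one_mulVec]
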